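/- For all sufficiently large n there exists a concept class 𝒞 of size n over domain [n] with NCTD(𝒞) = 1 and TD_min(𝒞) ≥ ⌊log₂(n) − 2·log₂(log₂(2n))⌋ − 4. -/

import Mathlib

open Finset

namespace NCTD8

variable {n : ℕ}

def g (o : Fin n → Fin n → Bool) (x y : Fin n) : Bool :=
  if x = y then true else ((o x y != o y x) != decide (x < y))

lemma boolsolve (p q r s : Bool) : (((p != q) != r) = s) ↔ (p = ((s != r) != q)) := by
  revert p q r s; decide

lemma rowcount (D : Finset (Fin n)) (c : Fin n → Bool) :
    Fintype.card {r : Fin n → Bool // ∀ a ∈ D, r a = c a} = 2 ^ (n - D.card) := by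
  classical
  have e : {r : Fin n → Bool // ∀ a ∈ D, r a = c a} ≃ ({z : Fin n // z ∉ D} → Bool) :=
    { toFun := fun r z => r.1 z.1
      invFun := fun f => ⟨fun i => if h : i ∈ D then c i else f ⟨i, h⟩, by
        intro a ha; simp [ha]⟩
      left_inv := by
        intro r
        ext i
        by_cases h : i ∈ D
        · simp [h, r.2 i h]
        · simp [h]
      right_inv := by
        intro f
        ext z
        simp [z.2] }
  rw [Fintype.card_congr e, Fintype.card_fun, Fintype.card_bool,
    Fintype.card_subtype_compl, Fintype.card_fin, Fintype.card_coe]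

lemma card_rows_not_match (D : Finset (Fin n)) (c : Fin n → Bool) :
    Fintype.card {r : Fin n → Bool // ¬ ∀ a ∈ D, r a = c a}
      = 2 ^ n - 2 ^ (n - D.card) := by
  classical
  rw [Fintype.card_subtype_compl, rowcount, Fintype.card_fun, Fintype.card_fin,
    Fintype.card_bool]

lemma count_bound (x : Fin n) (D : Finset (Fin n)) (hdn : D.card + 1 ≤ n) :
    Fintype.card {o : Fin n → Fin n → Bool //
        ∀ y, y ≠ x → y ∉ D → ¬ (∀ a ∈ D, g o y a = g o x a)}
      ≤ 2 ^ (n * (D.card + 1)) * (2 ^ n - 2 ^ (n - D.card)) ^ (n - D.card - 1) := by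
  classical
  set d := D.card with hd
  set S : Finset (Fin n) := (univ \ D).erase x with hS
  have memS : ∀ y : Fin n, y ∈ S ↔ y ≠ x ∧ y ∉ D := by
    intro y; simp [hS]
  have hScard_le : S.card ≤ n - d := by
    calc S.card ≤ (univ \ D).card := card_erase_le
    _ = n - d := by rw [card_sdiff_of_subset (subset_univ D), card_univ, Fintype.card_fin]
  have hScard_ge : n - d - 1 ≤ S.card := by
    have h1 : (univ \ D).card - 1 ≤ S.card := Finset.pred_card_le_card_erase
    rw [card_sdiff_of_subset (subset_univ D), card_univ, Fintype.card_fin] at h1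
    exact h1
  have hxS : x ∉ S := fun h => ((memS x).1 h).1 rfl
  have hDS : ∀ a ∈ D, a ∉ S := fun a ha h => ((memS a).1 h).2 ha
  set e := Equiv.piEquivPiSubtypeProd (fun y : Fin n => y ∈ S)
      (fun _ => Fin n → Bool) with he
  set P : (Fin n → Fin n → Bool) → Prop :=
    fun o => ∀ y, y ≠ x → y ∉ D → ¬ (∀ a ∈ D, g o y a = g o x a) with hP
  have e1 : {o : Fin n → Fin n → Bool // P o} ≃
      {q : ({y : Fin n // y ∈ S} → Fin n → Bool) × ({y : Fin n // ¬ y ∈ S} → Fin n → Bool) //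
        P (e.symm q)} :=
    e.subtypeEquiv (fun o => by rw [e.symm_apply_apply])
  have e2 : {q : ({y : Fin n // y ∈ S} → Fin n → Bool) ×
        ({y : Fin n // ¬ y ∈ S} → Fin n → Bool) // P (e.symm q)} ≃
      Σ b : ({y : Fin n // ¬ y ∈ S} → Fin n → Bool),
        {a : ({y : Fin n // y ∈ S} → Fin n → Bool) // P (e.symm (a, b))} :=
    { toFun := fun q => ⟨q.1.2, q.1.1, by simpa using q.2⟩
      invFun := fun q => ⟨(q.2.1, q.1), q.2.2⟩
      left_inv := fun q => rfl
      right_inv := fun q => rfl }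
  rw [Fintype.card_congr (e1.trans e2), Fintype.card_sigma]
  -- per-b bound
  have key : ∀ b : ({y : Fin n // ¬ y ∈ S} → Fin n → Bool),
      Fintype.card {a : ({y : Fin n // y ∈ S} → Fin n → Bool) // P (e.symm (a, b))}
      ≤ (2 ^ n - 2 ^ (n - d)) ^ S.card := by
    intro b
    set ob : Fin n → Fin n → Bool := e.symm ((fun _ _ => false), b) with hob
    have hob_eq : ∀ z : Fin n, z ∉ S → ∀ a : ({y : Fin n // y ∈ S} → Fin n → Bool),
        e.symm (a, b) z = ob z := by
      intro z hz a
      simp [he, Equiv.piEquivPiSubtypeProd, hz, hob]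
    have ha_eq : ∀ (z : Fin n) (hz : z ∈ S) (a : ({y : Fin n // y ∈ S} → Fin n → Bool)),
        e.symm (a, b) z = a ⟨z, hz⟩ := by
      intro z hz a
      simp [he, Equiv.piEquivPiSubtypeProd, hz]
    set c : Fin n → Fin n → Bool :=
      fun y a' => ((g ob x a' != decide (y < a')) != ob a' y) with hc
    have hPiff : ∀ a : ({y : Fin n // y ∈ S} → Fin n → Bool), P (e.symm (a, b)) ↔
        ∀ y : {y : Fin n // y ∈ S}, ¬ (∀ a' ∈ D, a y a' = c y.1 a') := by
      intro a
      have hmatch : ∀ (y : Fin n) (hy : y ∈ S), ∀ a' ∈ D,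
          ((g (e.symm (a, b)) y a' = g (e.symm (a, b)) x a') ↔ (a ⟨y, hy⟩ a' = c y a')) := by
        intro y hy a' ha'
        have hyx : y ≠ x := ((memS y).1 hy).1
        have hyD : y ∉ D := ((memS y).1 hy).2
        have hya' : y ≠ a' := fun h => hyD (h ▸ ha')
        have hgx : g (e.symm (a, b)) x a' = g ob x a' := by
          unfold g
          by_cases hxa : x = a'
          · simp [hxa]
          · rw [if_neg hxa, if_neg hxa, hob_eq x hxS, hob_eq a' (hDS a' ha')]
        have hgy : g (e.symm (a, b)) y a' =
            ((a ⟨y, hy⟩ a' != ob a' y) != decide (y < a')) := by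
          unfold g
          rw [if_neg hya', hob_eq a' (hDS a' ha'), ha_eq y hy]
        rw [hgx, hgy, boolsolve, hc]
      constructor
      · intro hp y hmat
        have hyx : y.1 ≠ x := ((memS y.1).1 y.2).1
        have hyD : y.1 ∉ D := ((memS y.1).1 y.2).2
        refine hp y.1 hyx hyD ?_
        intro a' ha'
        exact (hmatch y.1 y.2 a' ha').2 (hmat a' ha')
      · intro hp y hyx hyD hmat
        have hy : y ∈ S := (memS y).2 ⟨hyx, hyD⟩
        refine hp ⟨y, hy⟩ ?_
        intro a' ha'
        exact (hmatch y hy a' ha').1 (hmat a' ha')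
    calc Fintype.card {a : ({y : Fin n // y ∈ S} → Fin n → Bool) // P (e.symm (a, b))}
        = Fintype.card {a : ({y : Fin n // y ∈ S} → Fin n → Bool) //
            ∀ y : {y : Fin n // y ∈ S}, ¬ (∀ a' ∈ D, a y a' = c y.1 a')} :=
          Fintype.card_congr (Equiv.subtypeEquiv (Equiv.refl _)
            (fun a => by simpa using hPiff a))
      _ = ∏ y : {y : Fin n // y ∈ S},
            Fintype.card {r : Fin n → Bool // ¬ (∀ a' ∈ D, r a' = c y.1 a')} := by
          rw [Fintype.card_congr (Equiv.subtypePiEquivPi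
            (p := fun (y : {y : Fin n // y ∈ S}) (r : Fin n → Bool) =>
              ¬ ∀ a' ∈ D, r a' = c y.1 a')), Fintype.card_pi]
      _ = (2 ^ n - 2 ^ (n - d)) ^ S.card := by
          rw [Finset.prod_congr rfl (fun y _ => card_rows_not_match D (c y.1)),
            Finset.prod_const, Finset.card_univ, Fintype.card_coe]
      _ ≤ (2 ^ n - 2 ^ (n - d)) ^ S.card := le_rfl
  calc (∑ b : ({y : Fin n // ¬ y ∈ S} → Fin n → Bool),
        Fintype.card {a : ({y : Fin n // y ∈ S} → Fin n → Bool) // P (e.symm (a, b))})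
      ≤ ∑ _b : ({y : Fin n // ¬ y ∈ S} → Fin n → Bool),
          (2 ^ n - 2 ^ (n - d)) ^ S.card := Finset.sum_le_sum (fun b _ => key b)
    _ = Fintype.card ({y : Fin n // ¬ y ∈ S} → Fin n → Bool)
          * (2 ^ n - 2 ^ (n - d)) ^ S.card := by
        rw [Finset.sum_const, Finset.card_univ, smul_eq_mul]
    _ = 2 ^ (n * (n - S.card)) * (2 ^ n - 2 ^ (n - d)) ^ S.card := by
        rw [Fintype.card_fun, Fintype.card_fun, Fintype.card_bool, Fintype.card_fin,
          Fintype.card_subtype_compl, Fintype.card_fin, Fintype.card_coe, ← pow_mul,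
          Nat.mul_comm n (n - S.card)]
    _ ≤ 2 ^ (n * (d + 1)) * (2 ^ n - 2 ^ (n - d)) ^ (n - d - 1) := by
        obtain ⟨k, hk⟩ : ∃ k, S.card = (n - d - 1) + k :=
          ⟨S.card - (n - d - 1), by omega⟩
        have hM : (2 ^ n - 2 ^ (n - d)) ≤ 2 ^ n := Nat.sub_le _ _
        calc 2 ^ (n * (n - S.card)) * (2 ^ n - 2 ^ (n - d)) ^ S.card
            = 2 ^ (n * (n - S.card)) * ((2 ^ n - 2 ^ (n - d)) ^ (n - d - 1)
                * (2 ^ n - 2 ^ (n - d)) ^ k) := by rw [← pow_add, ← hk]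
          _ ≤ 2 ^ (n * (n - S.card)) * ((2 ^ n - 2 ^ (n - d)) ^ (n - d - 1)
                * (2 ^ n) ^ k) :=
              Nat.mul_le_mul_left _ (Nat.mul_le_mul_left _ (Nat.pow_le_pow_left hM k))
          _ = (2 ^ (n * (n - S.card)) * 2 ^ (n * k))
                * (2 ^ n - 2 ^ (n - d)) ^ (n - d - 1) := by
              rw [pow_mul]; ring
          _ = 2 ^ (n * (n - S.card) + n * k) * (2 ^ n - 2 ^ (n - d)) ^ (n - d - 1) := by
              rw [← pow_add]
          _ ≤ 2 ^ (n * (d + 1)) * (2 ^ n - 2 ^ (n - d)) ^ (n - d - 1) := by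
              have h1 : n * (n - S.card) + n * k ≤ n * (d + 1) := by
                have h2 : n - S.card + k ≤ d + 1 := by omega
                calc n * (n - S.card) + n * k = n * ((n - S.card) + k) := by ring
                  _ ≤ n * (d + 1) := Nat.mul_le_mul_left n h2
              exact Nat.mul_le_mul_right _ (Nat.pow_le_pow_right (by norm_num) h1)

variable {n : ℕ}

lemma exists_good (d : ℕ) (hdn : d + 1 ≤ n)
    (hnum : n * n.choose d * (2 ^ n - 2 ^ (n - d)) ^ (n - d - 1) < 2 ^ (n * (n - d - 1))) :
    ∃ o : Fin n → Fin n → Bool, ∀ x : Fin n, ∀ D : Finset (Fin n), D.card = d →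
      ∃ y : Fin n, y ≠ x ∧ y ∉ D ∧ (∀ a ∈ D, g o y a = g o x a) := by
  classical
  by_contra hcon
  push_neg at hcon
  -- every o lies in some bad set
  have hsub : (univ : Finset (Fin n → Fin n → Bool)) ⊆
      univ.biUnion (fun x : Fin n => (univ.powersetCard d).biUnion
        (fun D => univ.filter (fun o : Fin n → Fin n → Bool =>
          ∀ y, y ≠ x → y ∉ D → ¬ (∀ a ∈ D, g o y a = g o x a)))) := by
    intro o _
    obtain ⟨x, D, hD, hbad⟩ := hcon o
    simp only [Finset.mem_biUnion, Finset.mem_powersetCard, Finset.mem_filter,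
      Finset.mem_univ, true_and]
    refine ⟨x, ⟨D, ⟨subset_univ D, hD⟩, ?_⟩⟩
    intro y hyx hyD hall
    obtain ⟨a, ha, hne⟩ := hbad y hyx hyD
    exact hne (hall a ha)
  have hcard1 : (2 : ℕ) ^ (n * n) ≤
      (univ.biUnion (fun x : Fin n => (univ.powersetCard d).biUnion
        (fun D => univ.filter (fun o : Fin n → Fin n → Bool =>
          ∀ y, y ≠ x → y ∉ D → ¬ (∀ a ∈ D, g o y a = g o x a))))).card := by
    have := Finset.card_le_card hsub
    rwa [Finset.card_univ, Fintype.card_fun, Fintype.card_fun, Fintype.card_bool,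
      Fintype.card_fin, ← pow_mul] at this
  have hcard2 : (univ.biUnion (fun x : Fin n => (univ.powersetCard d).biUnion
        (fun D => univ.filter (fun o : Fin n → Fin n → Bool =>
          ∀ y, y ≠ x → y ∉ D → ¬ (∀ a ∈ D, g o y a = g o x a))))).card
      ≤ n * (n.choose d *
          (2 ^ (n * (d + 1)) * (2 ^ n - 2 ^ (n - d)) ^ (n - d - 1))) := by
    calc _ ≤ ∑ x : Fin n, ((univ.powersetCard d).biUnion
          (fun D => univ.filter (fun o : Fin n → Fin n → Bool =>
            ∀ y, y ≠ x → y ∉ D → ¬ (∀ a ∈ D, g o y a = g o x a)))).card :=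
        Finset.card_biUnion_le
      _ ≤ ∑ _x : Fin n, (n.choose d *
            (2 ^ (n * (d + 1)) * (2 ^ n - 2 ^ (n - d)) ^ (n - d - 1))) := by
          refine Finset.sum_le_sum (fun x _ => ?_)
          calc _ ≤ ∑ D ∈ univ.powersetCard d,
                (univ.filter (fun o : Fin n → Fin n → Bool =>
                  ∀ y, y ≠ x → y ∉ D → ¬ (∀ a ∈ D, g o y a = g o x a))).card :=
              Finset.card_biUnion_le
            _ ≤ ∑ _D ∈ univ.powersetCard d,
                (2 ^ (n * (d + 1)) * (2 ^ n - 2 ^ (n - d)) ^ (n - d - 1)) := by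
                refine Finset.sum_le_sum (fun D hD => ?_)
                have hDcard : D.card = d := (Finset.mem_powersetCard.1 hD).2
                have hdn' : D.card + 1 ≤ n := by rw [hDcard]; exact hdn
                have := count_bound x D hdn'
                rw [Fintype.card_subtype] at this
                rw [hDcard] at this
                exact this
            _ = n.choose d * (2 ^ (n * (d + 1)) * (2 ^ n - 2 ^ (n - d)) ^ (n - d - 1)) := by
                rw [Finset.sum_const, smul_eq_mul, Finset.card_powersetCard,
                  Finset.card_univ, Fintype.card_fin]
      _ = n * (n.choose d * (2 ^ (n * (d + 1)) * (2 ^ n - 2 ^ (n - d)) ^ (n - d - 1))) := by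
          rw [Finset.sum_const, Finset.card_univ, Fintype.card_fin, smul_eq_mul]
  have hfin : (2 : ℕ) ^ (n * n) ≤
      n * (n.choose d * (2 ^ (n * (d + 1)) * (2 ^ n - 2 ^ (n - d)) ^ (n - d - 1))) :=
    le_trans hcard1 hcard2
  have hcontr : n * (n.choose d * (2 ^ (n * (d + 1)) * (2 ^ n - 2 ^ (n - d)) ^ (n - d - 1)))
      < 2 ^ (n * n) := by
    have h2 : n * n = n * (d + 1) + n * (n - d - 1) := by
      have : (d + 1) + (n - d - 1) = n := by omega
      calc n * n = n * ((d + 1) + (n - d - 1)) := by rw [this]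
        _ = n * (d + 1) + n * (n - d - 1) := by ring
    calc n * (n.choose d * (2 ^ (n * (d + 1)) * (2 ^ n - 2 ^ (n - d)) ^ (n - d - 1)))
        = 2 ^ (n * (d + 1)) *
            (n * n.choose d * (2 ^ n - 2 ^ (n - d)) ^ (n - d - 1)) := by ring
      _ < 2 ^ (n * (d + 1)) * 2 ^ (n * (n - d - 1)) := by
          have hp : 0 < 2 ^ (n * (d + 1)) := Nat.pow_pos (by norm_num)
          exact (Nat.mul_lt_mul_left hp).2 hnum
      _ = 2 ^ (n * n) := by rw [← pow_add, ← h2]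
  exact absurd hfin (not_le_of_gt hcontr)



set_option maxRecDepth 10000
set_option maxHeartbeats 1000000

lemma numeric (n : ℕ) (hn : 2 ^ 100 ≤ n) :
    ∃ d : ℕ,
      (d : ℤ) = (⌊Real.logb 2 (n : ℝ) - 2 * Real.logb 2 (Real.logb 2 (2 * (n : ℝ)))⌋ - 4) - 1 ∧
      d + 1 ≤ n ∧
      n * n.choose d * (2 ^ n - 2 ^ (n - d)) ^ (n - d - 1) < 2 ^ (n * (n - d - 1)) := by
  have hnR : ((2 : ℝ) ^ (100 : ℕ)) ≤ (n : ℝ) := by exact_mod_cast hn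
  have hn100 : (100 : ℝ) ≤ (n : ℝ) := by
    have : (100 : ℝ) ≤ 2 ^ (100 : ℕ) := by norm_num
    linarith
  have hnpos : (0 : ℝ) < n := by linarith
  have hn1 : (1 : ℝ) ≤ n := by linarith
  have ht100 : (100 : ℝ) ≤ Real.logb 2 (n : ℝ) := by
    have h1 : Real.logb 2 ((2 : ℝ) ^ (100 : ℕ)) ≤ Real.logb 2 (n : ℝ) :=
      Real.logb_le_logb_of_le (by norm_num) (by positivity) hnR
    rwa [Real.logb_pow, Real.logb_self_eq_one (by norm_num : (1:ℝ) < 2), mul_one] at h1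
  clear hnR hn
  set t := Real.logb 2 (n : ℝ) with ht
  set s := Real.sqrt t with hs
  have hts : s * s = t := Real.mul_self_sqrt (by linarith)
  have hsnn : 0 ≤ s := Real.sqrt_nonneg t
  have hs10 : (10 : ℝ) ≤ s := by nlinarith
  have hlog2top : Real.log 2 < 0.6931471808 := Real.log_two_lt_d9
  have hlog2bot : (0.6931471803 : ℝ) < Real.log 2 := Real.log_two_gt_d9
  have hlogt : Real.log t ≤ 2 * s := by
    have h1 : Real.log s ≤ s - 1 := Real.log_le_sub_one_of_pos (by linarith)
    have h2 : Real.log s = Real.log t / 2 := Real.log_sqrt (by linarith)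
    linarith
  have hlogbt : Real.logb 2 t ≤ 3 * s := by
    rw [Real.logb, div_le_iff₀ (by linarith)]
    nlinarith
  set L := Real.logb 2 (2 * (n : ℝ)) with hL
  have hLt : L = 1 + t := by
    rw [hL, Real.logb_mul (by norm_num) (by positivity),
      Real.logb_self_eq_one (by norm_num : (1:ℝ) < 2)]
  have hlogbL : Real.logb 2 L ≤ 1 + 3 * s := by
    have h1 : L ≤ 2 * t := by rw [hLt]; linarith
    have h2 : Real.logb 2 L ≤ Real.logb 2 (2 * t) :=
      Real.logb_le_logb_of_le (by norm_num) (by rw [hLt]; linarith) h1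
    have h3 : Real.logb 2 (2 * t) = 1 + Real.logb 2 t := by
      rw [Real.logb_mul (by norm_num) (by linarith),
        Real.logb_self_eq_one (by norm_num : (1:ℝ) < 2)]
    linarith
  have hlogbL0 : 0 ≤ Real.logb 2 L := by
    apply Real.logb_nonneg (by norm_num)
    rw [hLt]; linarith
  have hF5 : (5 : ℝ) ≤ t - 2 * Real.logb 2 L := by nlinarith
  set Bz : ℤ := ⌊t - 2 * Real.logb 2 L⌋ - 4 with hBz
  have hB1 : 1 ≤ Bz := by
    have : (5 : ℤ) ≤ ⌊t - 2 * Real.logb 2 L⌋ := by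
      apply Int.le_floor.2; exact_mod_cast hF5
    omega
  set d : ℕ := (Bz - 1).toNat with hd
  have hdZ : (d : ℤ) = Bz - 1 := Int.toNat_of_nonneg (by omega)
  have hdR : (d : ℝ) = (Bz : ℝ) - 1 := by exact_mod_cast hdZ
  have hBzle : (Bz : ℝ) ≤ t - 2 * Real.logb 2 L - 4 := by
    have := Int.floor_le (t - 2 * Real.logb 2 L)
    push_cast [hBz]
    linarith
  have hdle : (d : ℝ) ≤ t - 2 * Real.logb 2 L - 5 := by rw [hdR]; linarith
  have hdt : (d : ℝ) + 1 ≤ t - 4 := by linarith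
  -- t ≤ n / 2
  have htn : t ≤ (n : ℝ) / 2 := by
    have hsn10 : (10 : ℝ) ≤ Real.sqrt (n : ℝ) := by
      nlinarith [Real.sq_sqrt (show (0:ℝ) ≤ (n:ℝ) by linarith),
        Real.sqrt_nonneg (n : ℝ)]
    have hsnsq : Real.sqrt (n : ℝ) * Real.sqrt (n : ℝ) = (n : ℝ) :=
      Real.mul_self_sqrt (by linarith)
    have hlogn : Real.log (n : ℝ) ≤ 2 * Real.sqrt (n : ℝ) := by
      have h1 : Real.log (Real.sqrt (n : ℝ)) ≤ Real.sqrt (n : ℝ) - 1 :=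
        Real.log_le_sub_one_of_pos (by linarith)
      have h2 : Real.log (Real.sqrt (n : ℝ)) = Real.log (n : ℝ) / 2 :=
        Real.log_sqrt (by linarith)
      linarith
    rw [ht, Real.logb, div_le_iff₀ (by linarith)]
    nlinarith
  have hd1n : (d : ℝ) + 1 ≤ (n : ℝ) / 2 := by linarith
  have hdn : d + 1 ≤ n := by
    have h : ((d : ℝ) + 1) ≤ (n : ℝ) := by linarith
    exact_mod_cast h
  refine ⟨d, by rw [hdZ], hdn, ?_⟩
  -- now the counting inequality
  set m : ℕ := n - d - 1 with hm
  have hmR : (m : ℝ) = (n : ℝ) - d - 1 := by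
    rw [hm]
    push_cast [Nat.sub_sub]
    rw [Nat.cast_sub (by omega)]
    push_cast
    ring
  have hmhalf : (n : ℝ) / 2 - 1 ≤ (m : ℝ) := by rw [hmR]; linarith
  have h2dpos : (0 : ℝ) < 2 ^ d := by positivity
  have hLpos : (0 : ℝ) < L := by rw [hLt]; linarith
  -- 2^d ≤ n / (32 L²)
  have h2d : (2 : ℝ) ^ d ≤ (n : ℝ) / (32 * L ^ 2) := by
    have e1 : ((2 : ℝ) ^ d) = (2 : ℝ) ^ ((d : ℝ)) := by
      rw [← Real.rpow_natCast]
    have e2 : (2 : ℝ) ^ ((d : ℝ)) ≤ (2 : ℝ) ^ (t - 2 * Real.logb 2 L - 5) :=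
      Real.rpow_le_rpow_of_exponent_le (by norm_num) hdle
    have e3 : (2 : ℝ) ^ (t - 2 * Real.logb 2 L - 5)
        = (2 : ℝ) ^ t / ((2 : ℝ) ^ (2 * Real.logb 2 L) * (2 : ℝ) ^ ((5 : ℝ))) := by
      rw [show t - 2 * Real.logb 2 L - 5 = t - (2 * Real.logb 2 L + 5) by ring,
        Real.rpow_sub (by norm_num), Real.rpow_add (by norm_num)]
    have e4 : (2 : ℝ) ^ t = (n : ℝ) := Real.rpow_logb (by norm_num) (by norm_num) hnpos
    have e5 : (2 : ℝ) ^ (2 * Real.logb 2 L) = L ^ 2 := by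
      rw [show 2 * Real.logb 2 L = Real.logb 2 (L ^ 2) by
          rw [Real.logb_pow]; push_cast; ring]
      exact Real.rpow_logb (by norm_num) (by norm_num) (by positivity)
    have e6 : (2 : ℝ) ^ ((5 : ℝ)) = 32 := by
      rw [show (5 : ℝ) = ((5 : ℕ) : ℝ) by norm_num, Real.rpow_natCast]; norm_num
    rw [e1]
    calc (2 : ℝ) ^ ((d : ℝ)) ≤ (2 : ℝ) ^ (t - 2 * Real.logb 2 L - 5) := e2
      _ = (n : ℝ) / (L ^ 2 * 32) := by rw [e3, e4, e5, e6]
      _ = (n : ℝ) / (32 * L ^ 2) := by ring_nf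
  -- 16 L² ≤ m / 2^d
  have hm2d : 15 * L ^ 2 ≤ (m : ℝ) / 2 ^ d := by
    have hL2pos : (0 : ℝ) < 32 * L ^ 2 := by positivity
    have h1 : (2 : ℝ) ^ d * (32 * L ^ 2) ≤ (n : ℝ) := (le_div_iff₀ hL2pos).1 h2d
    rw [le_div_iff₀ h2dpos]
    nlinarith [hmhalf, h1, hn100]
  -- (d+1) log n < 16 L²
  have hlogn_t : Real.log (n : ℝ) = t * Real.log 2 := by
    rw [ht, Real.logb]
    field_simp
  have hLHS : ((d : ℝ) + 1) * Real.log (n : ℝ) < 15 * L ^ 2 := by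
    have hlognn : 0 ≤ Real.log (n : ℝ) := Real.log_nonneg hn1
    have h1 : ((d : ℝ) + 1) * Real.log (n : ℝ) ≤ t * (t * Real.log 2) := by
      rw [hlogn_t]
      apply mul_le_mul (by linarith) le_rfl (by rw [← hlogn_t]; exact hlognn) (by linarith)
    rw [hLt]
    nlinarith
  have hmain : ((d : ℝ) + 1) * Real.log (n : ℝ) < (m : ℝ) / 2 ^ d :=
    lt_of_lt_of_le hLHS hm2d
  -- final: cast the `ℕ` inequality to `ℝ`
  have hpowsub : ((2 : ℕ) ^ (n - d) : ℕ) ≤ 2 ^ n := Nat.pow_le_pow_right (by norm_num) (by omega)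
  rw [← Nat.cast_lt (α := ℝ)]
  push_cast [Nat.cast_sub hpowsub]
  -- goal shape: (n * choose * (2^n - 2^(n-d))^m : ℝ) < 2^(n*(n-d-1))
  have hchoose : ((n.choose d : ℕ) : ℝ) ≤ (n : ℝ) ^ d := by
    exact_mod_cast Nat.choose_le_pow n d
  have hpow_eq : ((2 : ℝ) ^ (n - d)) * 2 ^ d = 2 ^ n := by
    rw [← pow_add]
    congr 1
    omega
  have hMnn : (0 : ℝ) ≤ 2 ^ n - 2 ^ (n - d) := by
    have : ((2 : ℝ) ^ (n - d)) ≤ 2 ^ n := by exact_mod_cast hpowsub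
    linarith
  have hMexp : (2 : ℝ) ^ n - 2 ^ (n - d) ≤ 2 ^ n * Real.exp (-((2 ^ d : ℝ))⁻¹) := by
    have h1 : (-((2 ^ d : ℝ))⁻¹) + 1 ≤ Real.exp (-((2 ^ d : ℝ))⁻¹) :=
      Real.add_one_le_exp _
    have h2 : ((2 : ℝ) ^ (n - d)) = 2 ^ n * ((2 ^ d : ℝ))⁻¹ := by
      field_simp
      linarith [hpow_eq]
    rw [h2]
    have h3 : (0 : ℝ) < (2 : ℝ) ^ n := by positivity
    nlinarith
  have step1 : ((n : ℝ) * (n.choose d) * ((2 : ℝ) ^ n - 2 ^ (n - d)) ^ m)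
      ≤ (n : ℝ) ^ (d + 1) * ((2 : ℝ) ^ n * Real.exp (-((2 ^ d : ℝ))⁻¹)) ^ m := by
    apply mul_le_mul
    · calc (n : ℝ) * (n.choose d) ≤ (n : ℝ) * (n : ℝ) ^ d :=
          mul_le_mul_of_nonneg_left hchoose (by positivity)
        _ = (n : ℝ) ^ (d + 1) := by ring
    · exact pow_le_pow_left₀ hMnn hMexp m
    · exact pow_nonneg hMnn m
    · positivity
  have step2 : (n : ℝ) ^ (d + 1) * ((2 : ℝ) ^ n * Real.exp (-((2 ^ d : ℝ))⁻¹)) ^ m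
      < ((2 : ℝ) ^ n) ^ m := by
    rw [mul_pow, ← Real.exp_nat_mul]
    have hkey : (n : ℝ) ^ (d + 1) * Real.exp ((m : ℝ) * (-((2 ^ d : ℝ))⁻¹)) < 1 := by
      have hn_eq : (n : ℝ) ^ (d + 1) = Real.exp (((d : ℝ) + 1) * Real.log (n : ℝ)) := by
        conv_lhs => rw [← Real.exp_log hnpos]
        rw [← Real.exp_nat_mul]
        push_cast
        ring_nf
      rw [hn_eq, ← Real.exp_add]
      apply Real.exp_lt_one_iff.2
      have : (m : ℝ) * (-((2 ^ d : ℝ))⁻¹) = -((m : ℝ) / 2 ^ d) := by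
        field_simp
      rw [this]
      linarith
    calc (n : ℝ) ^ (d + 1) * (((2 : ℝ) ^ n) ^ m * Real.exp ((m : ℝ) * (-((2 ^ d : ℝ))⁻¹)))
        = ((2 : ℝ) ^ n) ^ m * ((n : ℝ) ^ (d + 1) * Real.exp ((m : ℝ) * (-((2 ^ d : ℝ))⁻¹))) := by
          ring
      _ < ((2 : ℝ) ^ n) ^ m * 1 := by
          apply mul_lt_mul_of_pos_left hkey (by positivity)
      _ = ((2 : ℝ) ^ n) ^ m := by ring
  have final : ((n : ℝ) * (n.choose d) * ((2 : ℝ) ^ n - 2 ^ (n - d)) ^ m)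
      < ((2 : ℝ) ^ n) ^ m := lt_of_le_of_lt step1 step2
  rw [show ((2:ℝ) ^ n) ^ m = 2 ^ (n * m) from by rw [← pow_mul]] at final
  convert final using 2


variable {n : ℕ}

lemma g_self (o : Fin n → Fin n → Bool) (x : Fin n) : g o x x = true := by
  simp [g]

lemma g_antisymm (o : Fin n → Fin n → Bool) {x y : Fin n} (h : x ≠ y) :
    g o x y = !(g o y x) := by
  unfold g
  rw [if_neg h, if_neg (Ne.symm h)]
  rcases lt_or_gt_of_ne h with h' | h'
  · have h2 : ¬ (y < x) := not_lt_of_gt h'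
    simp only [h', h2, decide_true, decide_false]
    cases o x y <;> cases o y x <;> rfl
  · have h2 : ¬ (x < y) := not_lt_of_gt h'
    simp only [h', h2, decide_true, decide_false]
    cases o x y <;> cases o y x <;> rfl

def Cc (o : Fin n → Fin n → Bool) (x : Fin n) : Finset (Fin n) :=
  univ.filter (fun a => g o x a = true)

lemma mem_Cc {o : Fin n → Fin n → Bool} {x a : Fin n} :
    a ∈ Cc o x ↔ g o x a = true := by
  simp [Cc]

lemma Cc_inj (o : Fin n → Fin n → Bool) : Function.Injective (Cc o) := by
  intro x y h
  by_contra hne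
  have hx : x ∈ Cc o x := mem_Cc.2 (g_self o x)
  have hy : y ∈ Cc o y := mem_Cc.2 (g_self o y)
  rw [h] at hx
  rw [← h] at hy
  have h1 : g o y x = true := mem_Cc.1 hx
  have h2 : g o x y = true := mem_Cc.1 hy
  rw [g_antisymm o hne, h1] at h2
  exact Bool.false_ne_true h2

end NCTD8

/-- For all sufficiently large `n` there is a concept class `𝒞`
of size `n` over `Fin n` with `NCTD(𝒞) = 1` and
`TD_min(𝒞) ≥ ⌊log₂ n − 2 log₂ log₂ (2n)⌋ − 4`. -/
theorem stmt8 :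
    ∃ N : ℕ, ∀ n : ℕ, N ≤ n →
      ∃ 𝒞 : Finset (Finset (Fin n)),
        𝒞.card = n ∧
        -- NCTD(𝒞) = 1 : there is a no-clash teacher of order 1 ...
        (∃ T : Finset (Fin n) → Finset (Fin n),
          (∀ C ∈ 𝒞, (T C).card ≤ 1) ∧
          (∀ C ∈ 𝒞, ∀ C' ∈ 𝒞, C ≠ C' →
            ∃ x ∈ T C ∪ T C', (x ∈ C ↔ x ∉ C'))) ∧
        -- ... and none of order 0
        (¬ ∃ T : Finset (Fin n) → Finset (Fin n),
          (∀ C ∈ 𝒞, (T C).card = 0) ∧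
          (∀ C ∈ 𝒞, ∀ C' ∈ 𝒞, C ≠ C' →
            ∃ x ∈ T C ∪ T C', (x ∈ C ↔ x ∉ C'))) ∧
        -- TD_min(𝒞) ≥ ⌊log₂ n − 2·log₂ log₂ (2n)⌋ − 4 :
        -- every teaching set of every concept is at least that large
        (∀ C ∈ 𝒞, ∀ D : Finset (Fin n),
          (∀ C' ∈ 𝒞, C' ≠ C → ∃ x ∈ D, (x ∈ C ↔ x ∉ C')) →
          (⌊Real.logb 2 n - 2 * Real.logb 2 (Real.logb 2 (2 * n))⌋ - 4 : ℤ)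
            ≤ (D.card : ℤ)) := by
  classical
  refine ⟨2 ^ 100, fun n hn => ?_⟩
  obtain ⟨d, hdB, hdn, hnum⟩ := NCTD8.numeric n hn
  obtain ⟨o, hgood⟩ := NCTD8.exists_good d hdn hnum
  have hn2 : 2 ≤ n := le_trans (by norm_num) hn
  refine ⟨Finset.univ.image (NCTD8.Cc o), ?_, ?_, ?_, ?_⟩
  · rw [Finset.card_image_of_injective _ (NCTD8.Cc_inj o), Finset.card_univ,
      Fintype.card_fin]
  · -- order-1 no-clash teacher
    refine ⟨fun C => Finset.univ.filter (fun x => NCTD8.Cc o x = C), ?_, ?_⟩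
    · intro C _
      apply Finset.card_le_one.2
      intro a ha b hb
      rw [Finset.mem_filter] at ha hb
      exact NCTD8.Cc_inj o (ha.2.trans hb.2.symm)
    · intro C hC C' hC' hne
      obtain ⟨x, -, rfl⟩ := Finset.mem_image.1 hC
      obtain ⟨y, -, rfl⟩ := Finset.mem_image.1 hC'
      have hxy : x ≠ y := fun h => hne (by rw [h])
      by_cases hyx : NCTD8.g o y x = true
      · -- then g o x y = false : use witness y
        have hgxy : NCTD8.g o x y = false := by
          rw [NCTD8.g_antisymm o hxy, hyx]; rfl
        refine ⟨y, ?_, ?_⟩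
        · apply Finset.mem_union_right
          simp [Finset.mem_filter]
        · constructor
          · intro hy
            exact absurd (NCTD8.mem_Cc.1 hy) (by simp [hgxy])
          · intro hy
            exact absurd (NCTD8.mem_Cc.2 (NCTD8.g_self o y)) hy
      · -- g o y x = false : use witness x
        refine ⟨x, ?_, ?_⟩
        · apply Finset.mem_union_left
          simp [Finset.mem_filter]
        · constructor
          · intro _
            intro hx
            exact hyx (NCTD8.mem_Cc.1 hx)
          · intro _
            exact NCTD8.mem_Cc.2 (NCTD8.g_self o x)
  · -- no order-0 teacher
    rintro ⟨T, hT0, hTpair⟩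
    have h0 : (⟨0, by omega⟩ : Fin n) ≠ ⟨1, by omega⟩ := by
      simp [Fin.ext_iff]
    set x0 : Fin n := ⟨0, by omega⟩
    set x1 : Fin n := ⟨1, by omega⟩
    have hC0 : NCTD8.Cc o x0 ∈ Finset.univ.image (NCTD8.Cc o) :=
      Finset.mem_image_of_mem _ (Finset.mem_univ _)
    have hC1 : NCTD8.Cc o x1 ∈ Finset.univ.image (NCTD8.Cc o) :=
      Finset.mem_image_of_mem _ (Finset.mem_univ _)
    have hne : NCTD8.Cc o x0 ≠ NCTD8.Cc o x1 :=
      fun h => h0 (NCTD8.Cc_inj o h)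
    obtain ⟨z, hz, -⟩ := hTpair _ hC0 _ hC1 hne
    rw [Finset.mem_union, Finset.card_eq_zero.1 (hT0 _ hC0),
      Finset.card_eq_zero.1 (hT0 _ hC1)] at hz
    rcases hz with hz | hz <;> exact absurd hz (Finset.notMem_empty z)
  · -- teaching dimension lower bound
    intro C hC D hteach
    obtain ⟨x, -, rfl⟩ := Finset.mem_image.1 hC
    have hgoal : d + 1 ≤ D.card := by
      by_contra hlt
      push_neg at hlt
      have hDd : D.card ≤ d := by omega
      obtain ⟨D', hDD', hD'card⟩ := Finset.exists_superset_card_eq hDd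
        (by rw [Fintype.card_fin]; omega)
      obtain ⟨y, hyx, -, hmatch⟩ := hgood x D' hD'card
      have hC'mem : NCTD8.Cc o y ∈ Finset.univ.image (NCTD8.Cc o) :=
        Finset.mem_image_of_mem _ (Finset.mem_univ _)
      have hC'ne : NCTD8.Cc o y ≠ NCTD8.Cc o x :=
        fun h => hyx (NCTD8.Cc_inj o h)
      obtain ⟨a, haD, hiff⟩ := hteach _ hC'mem hC'ne
      have heq : NCTD8.g o y a = NCTD8.g o x a := hmatch a (hDD' haD)
      rw [NCTD8.mem_Cc, NCTD8.mem_Cc, heq] at hiff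
      tauto
    have : ((d : ℤ) + 1) ≤ (D.card : ℤ) := by exact_mod_cast hgoal
    omega
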